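/- For every vector C ∈ ℤ[i]⁵ there exists a vector C' ∈ ℤ⁵ (viewed inside ℤ[i]⁵, i.e., all of its entries have imaginary part zero) such that C − C' lies in the ℤ[i]-span of the columns of K̄. In other words, every firing equivalence class of chip configurations on R₁₀ contains a configuration with no imaginary chips. -/
import Mathlib


open Matrix

/-- The 5×5 integer matrix `D` with `D j k = 1` if `j = k`, `-1` if `j - k ≡ ±1 (mod 5)`,
and `0` otherwise. -/
def Dmat : Matrix (Fin 5) (Fin 5) ℤ := fun j k =>
  if j = k then 1
  else if (j : ZMod 5) - (k : ZMod 5) = 1 ∨ (j : ZMod 5) - (k : ZMod 5) = -1 then -1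
  else 0

/-- The Gaussian integer `i`. -/
def gi : GaussianInt := ⟨0, 1⟩

/-- `K̄ = I₅ + i • D`, a symmetric 5×5 matrix over the Gaussian integers:
`1 + i` on the diagonal, `-i` in positions with `j - k ≡ ±1 (mod 5)`, `0` elsewhere. -/
noncomputable def Kbar : Matrix (Fin 5) (Fin 5) GaussianInt :=
  1 + gi • (Dmat.map (Int.cast : ℤ → GaussianInt))

/-- Explicit inverse of `Dmat` over `ℤ`. -/
def Emat : Matrix (Fin 5) (Fin 5) ℤ :=
  !![1, 0, -1, -1, 0;
     0, 1, 0, -1, -1;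
     -1, 0, 1, 0, -1;
     -1, -1, 0, 1, 0;
     0, -1, -1, 0, 1]

lemma DE : Dmat * Emat = 1 := by
  decide

lemma im_Kbar_mulVec (p : Fin 5 → ℤ) (j : Fin 5) :
    ((Kbar.mulVec fun k => ((p k : ℤ) : GaussianInt)) j).im = Dmat.mulVec p j := by
  have him : ∀ (f : Fin 5 → GaussianInt),
      (∑ k, f k).im = ∑ k, (f k).im := fun f =>
    map_sum (AddMonoidHom.mk' Zsqrtd.im (fun a b => Zsqrtd.im_add a b)) f Finset.univ
  simp only [Matrix.mulVec, dotProduct, him]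
  refine Finset.sum_congr rfl fun k _ => ?_
  simp [Kbar, Matrix.one_apply, gi, Zsqrtd.im_mul, Zsqrtd.re_mul,
    Matrix.add_apply, Matrix.smul_apply, Matrix.map_apply, smul_eq_mul]
  split <;> simp

theorem stmt_5 (C : Fin 5 → GaussianInt) :
    ∃ C' : Fin 5 → GaussianInt, (∀ j, (C' j).im = 0) ∧
      C - C' ∈ LinearMap.range Kbar.mulVecLin := by
  set b : Fin 5 → ℤ := fun j => (C j).im with hb
  set p : Fin 5 → ℤ := Emat.mulVec b with hp
  set v : Fin 5 → GaussianInt := fun k => ((p k : ℤ) : GaussianInt) with hv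
  refine ⟨C - Kbar.mulVec v, fun j => ?_, ⟨v, by simp [Matrix.mulVecLin_apply]⟩⟩
  have h1 : ((Kbar.mulVec v) j).im = Dmat.mulVec p j := im_Kbar_mulVec p j
  have h2 : Dmat.mulVec p j = b j := by
    rw [hp, Matrix.mulVec_mulVec, DE, Matrix.one_mulVec]
  simp [Pi.sub_apply, Zsqrtd.im_sub, h1, h2, hb]
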